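/- Let B be an m×m real symmetric positive definite matrix, A an m×m real symmetric matrix, and Q an m×k real matrix with Qᵀ B Q = I_k. Set C := B⁻¹ A and Π := Q Qᵀ B. If ‖(I − Π) C‖_B ≤ ε, then ‖C − Π C Π‖_B ≤ 2ε; equivalently, ‖B⁻¹(A − (BQ)(Qᵀ A Q)(BQ)ᵀ)‖_B ≤ 2ε. -/

import Mathlib

open Matrix

/-- The vector `B`-norm `‖x‖_B = √(xᵀ B x)`. -/
noncomputable def vecMNorm {m : ℕ} (M : Matrix (Fin m) (Fin m) ℝ) (x : Fin m → ℝ) : ℝ :=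
  Real.sqrt (x ⬝ᵥ (M *ᵥ x))

/-- The induced operator `B`-norm `‖A‖_B = sup_{x ≠ 0} ‖A x‖_B / ‖x‖_B`. -/
noncomputable def matMNorm {m : ℕ} (M A : Matrix (Fin m) (Fin m) ℝ) : ℝ :=
  ⨆ x : {x : Fin m → ℝ // x ≠ 0}, vecMNorm M (A *ᵥ (x : Fin m → ℝ)) / vecMNorm M (x : Fin m → ℝ)

/-- Type synonym for `Fin m → ℝ`, carrying the `B`-inner-product structure without
clashing with the `Pi` instances. -/
def BVec (m : ℕ) : Type := Fin m → ℝ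

/-- with `C = B⁻¹A` and `Π = Q Qᵀ B`, if `‖(I − Π) C‖_B ≤ ε` then
`‖C − Π C Π‖_B ≤ 2ε`; equivalently `‖B⁻¹(A − (BQ)(QᵀAQ)(BQ)ᵀ)‖_B ≤ 2ε`. -/
theorem stmt_12 {m k : ℕ} (B A : Matrix (Fin m) (Fin m) ℝ)
    (Q : Matrix (Fin m) (Fin k) ℝ) (ε : ℝ)
    (hB : B.PosDef) (hA : A.IsSymm) (hQ : Qᵀ * B * Q = 1)
    (herr : matMNorm B ((1 - Q * Qᵀ * B) * (B⁻¹ * A)) ≤ ε) :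
    matMNorm B ((B⁻¹ * A) - (Q * Qᵀ * B) * (B⁻¹ * A) * (Q * Qᵀ * B)) ≤ 2 * ε ∧
    matMNorm B (B⁻¹ * (A - (B * Q) * (Qᵀ * A * Q) * (B * Q)ᵀ)) ≤ 2 * ε := by
  classical
  have hdet : IsUnit B.det := isUnit_iff_ne_zero.mpr hB.det_pos.ne'
  have hBiB : B⁻¹ * B = 1 := Matrix.nonsing_inv_mul B hdet
  have hBBi : B * B⁻¹ = 1 := Matrix.mul_nonsing_inv B hdet
  have hBsymm : Bᵀ = B := hB.isHermitian.eq
  letI instN : NormedAddCommGroup (BVec m) := Matrix.toNormedAddCommGroup B hB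
  letI instI : InnerProductSpace ℝ (BVec m) := Matrix.toInnerProductSpace B hB.posSemidef
  letI instF : FiniteDimensional ℝ (BVec m) := by
    exact inferInstanceAs (FiniteDimensional ℝ (Fin m → ℝ))
  letI instC : CompleteSpace (BVec m) := FiniteDimensional.complete ℝ _
  set C : Matrix (Fin m) (Fin m) ℝ := B⁻¹ * A with hC
  set P : Matrix (Fin m) (Fin m) ℝ := Q * Qᵀ * B with hP
  let T : Matrix (Fin m) (Fin m) ℝ → (BVec m →L[ℝ] BVec m) :=
    fun M => LinearMap.toContinuousLinearMap
      (M.mulVecLin : (Fin m → ℝ) →ₗ[ℝ] (Fin m → ℝ))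
  have hTapp : ∀ (M : Matrix (Fin m) (Fin m) ℝ) (x : BVec m), T M x = M *ᵥ x := fun _ _ => rfl
  have hinner : ∀ x y : BVec m, (inner ℝ x y : ℝ) = x ⬝ᵥ (B *ᵥ y) := fun x y => by
    show (B *ᵥ y) ⬝ᵥ star x = _; exact dotProduct_comm _ _
  have hnorm : ∀ x : BVec m, vecMNorm B x = ‖x‖ := fun x => by
    show Real.sqrt _ = Real.sqrt (RCLike.re ((B *ᵥ x) ⬝ᵥ star x)); exact congrArg Real.sqrt (dotProduct_comm _ _)
  -- identify matMNorm with the operator norm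
  have hmat : ∀ M : Matrix (Fin m) (Fin m) ℝ, matMNorm B M = ‖T M‖ := by
    intro M
    have hub : ∀ z : {x : Fin m → ℝ // x ≠ 0},
        vecMNorm B (M *ᵥ (z : Fin m → ℝ)) / vecMNorm B (z : Fin m → ℝ) ≤ ‖T M‖ := by
      rintro ⟨x, hx⟩
      let x' : BVec m := x
      have hx' : x' ≠ 0 := hx
      have h1 : vecMNorm B (M *ᵥ x) = ‖T M x'‖ := hnorm (T M x')
      have h2 : vecMNorm B x = ‖x'‖ := hnorm x'
      show vecMNorm B (M *ᵥ x) / vecMNorm B x ≤ ‖T M‖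
      rw [h1, h2, div_le_iff₀ (norm_pos_iff.mpr hx')]
      exact (T M).le_opNorm _
    apply le_antisymm
    · exact Real.iSup_le hub (norm_nonneg _)
    · apply ContinuousLinearMap.opNorm_le_bound
      · exact Real.iSup_nonneg fun z => div_nonneg (Real.sqrt_nonneg _) (Real.sqrt_nonneg _)
      · intro x
        by_cases hx : x = (0 : BVec m)
        · rw [hx]; simp
        · have h1 : vecMNorm B (M *ᵥ x) / vecMNorm B x ≤ matMNorm B M :=
            le_ciSup_of_le ⟨‖T M‖, by rintro r ⟨z, rfl⟩; exact hub z⟩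
              (⟨x, hx⟩ : {x : Fin m → ℝ // x ≠ 0}) le_rfl
          have hxpos : (0:ℝ) < ‖x‖ := norm_pos_iff.mpr hx
          have hvx : vecMNorm B x = ‖x‖ := hnorm x
          rw [div_le_iff₀ (by rw [hvx]; exact hxpos)] at h1
          have hMx : vecMNorm B (M *ᵥ x) = ‖T M x‖ := hnorm (T M x)
          calc ‖T M x‖ = vecMNorm B (M *ᵥ x) := hMx.symm
            _ ≤ matMNorm B M * vecMNorm B x := h1
            _ = matMNorm B M * ‖x‖ := by rw [hvx]
  clear_value C P
  have hTmul : ∀ M N : Matrix (Fin m) (Fin m) ℝ, T (M * N) = (T M).comp (T N) := by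
    intro M N; ext x; show (M * N) *ᵥ x = M *ᵥ (N *ᵥ x); exact (Matrix.mulVec_mulVec _ _ _).symm
  -- self-adjointness criterion
  have hadj : ∀ M : Matrix (Fin m) (Fin m) ℝ, Mᵀ * B = B * M →
      ContinuousLinearMap.adjoint (T M) = T M := by
    intro M hM
    symm
    rw [ContinuousLinearMap.eq_adjoint_iff]
    intro x y
    rw [hinner, hinner, hTapp, hTapp]
    calc (M *ᵥ (x : Fin m → ℝ)) ⬝ᵥ (B *ᵥ y)
        = ((x : Fin m → ℝ) ᵥ* Mᵀ) ⬝ᵥ (B *ᵥ y) :=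
          congrArg (fun v => v ⬝ᵥ (B *ᵥ (y : Fin m → ℝ))) (Matrix.vecMul_transpose M (x : Fin m → ℝ)).symm
      _ = ((x : Fin m → ℝ) ᵥ* Mᵀ ᵥ* B) ⬝ᵥ y := Matrix.dotProduct_mulVec _ _ _
      _ = ((x : Fin m → ℝ) ᵥ* (Mᵀ * B)) ⬝ᵥ y :=
          congrArg (fun v => v ⬝ᵥ (y : Fin m → ℝ)) (Matrix.vecMul_vecMul (x : Fin m → ℝ) Mᵀ B)
      _ = ((x : Fin m → ℝ) ᵥ* (B * M)) ⬝ᵥ y :=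
          congrArg (fun N => ((x : Fin m → ℝ) ᵥ* N) ⬝ᵥ (y : Fin m → ℝ)) hM
      _ = (x : Fin m → ℝ) ⬝ᵥ ((B * M) *ᵥ y) := (Matrix.dotProduct_mulVec _ _ _).symm
      _ = (x : Fin m → ℝ) ⬝ᵥ (B *ᵥ (M *ᵥ y)) :=
          congrArg (fun v => (x : Fin m → ℝ) ⬝ᵥ v) (Matrix.mulVec_mulVec (y : Fin m → ℝ) B M).symm
  have hPtB : Pᵀ * B = B * P := by
    rw [hP]
    simp only [Matrix.transpose_mul, Matrix.transpose_transpose, hBsymm, Matrix.mul_assoc]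
  have hadjP : ContinuousLinearMap.adjoint (T P) = T P := hadj P hPtB
  have hadjC : ContinuousLinearMap.adjoint (T C) = T C := by
    apply hadj
    rw [hC]
    calc (B⁻¹ * A)ᵀ * B = Aᵀ * (B⁻¹)ᵀ * B := by rw [Matrix.transpose_mul]
      _ = A * B⁻¹ * B := by rw [hA, Matrix.transpose_nonsing_inv, hBsymm]
      _ = A := by rw [Matrix.mul_assoc, hBiB, Matrix.mul_one]
      _ = B * (B⁻¹ * A) := by rw [← Matrix.mul_assoc, hBBi, Matrix.one_mul]
  have hadj1P : ContinuousLinearMap.adjoint (T (1 - P)) = T (1 - P) := by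
    apply hadj
    rw [Matrix.transpose_sub, Matrix.transpose_one, Matrix.sub_mul, Matrix.one_mul, hPtB,
      Matrix.mul_sub, Matrix.mul_one]
  -- P is idempotent
  have hPP : P * P = P := by
    rw [hP]
    calc Q * Qᵀ * B * (Q * Qᵀ * B) = Q * (Qᵀ * B * Q) * (Qᵀ * B) := by
          simp only [Matrix.mul_assoc]
      _ = Q * Qᵀ * B := by rw [hQ, Matrix.mul_one, Matrix.mul_assoc]
  -- ‖T P‖ ≤ 1
  have hPnorm : ‖T P‖ ≤ 1 := by
    apply ContinuousLinearMap.opNorm_le_bound _ zero_le_one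
    intro x
    rw [one_mul]
    have h1 : ‖T P x‖ * ‖T P x‖ = (inner ℝ (T P x) (T P x) : ℝ) :=
      (real_inner_self_eq_norm_mul_norm _).symm
    have h2 := ContinuousLinearMap.adjoint_inner_left (𝕜 := ℝ) (T P) (T P x) x
    rw [hadjP] at h2
    have h5 : (T P).comp (T P) = T P := by rw [← hTmul, hPP]
    have h4 : T P (T P x) = T P x := by
      calc T P (T P x) = ((T P).comp (T P)) x := rfl
        _ = T P x := by rw [h5]
    rw [h4] at h2
    have h3 : (inner ℝ x (T P x) : ℝ) ≤ ‖x‖ * ‖T P x‖ := real_inner_le_norm _ _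
    nlinarith [norm_nonneg (T P x), norm_nonneg x]
  have hε : 0 ≤ ε := le_trans (by rw [hmat]; exact norm_nonneg _) herr
  have herr' : ‖T ((1 - P) * C)‖ ≤ ε := by rw [← hmat]; exact herr
  have hsplit : C - P * C * P = (1 - P) * C + P * (C * (1 - P)) := by noncomm_ring
  have key : ‖T (C - P * C * P)‖ ≤ 2 * ε := by
    have hTadd : T (C - P * C * P) = T ((1 - P) * C) + T (P * (C * (1 - P))) := by
      ext x
      show (C - P * C * P) *ᵥ x = ((1 - P) * C) *ᵥ x + (P * (C * (1 - P))) *ᵥ x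
      rw [hsplit]; exact Matrix.add_mulVec _ _ _
    have hterm2 : ‖T (P * (C * (1 - P)))‖ ≤ ε := by
      have hadjcomp : ContinuousLinearMap.adjoint (T (P * (C * (1 - P))))
          = T ((1 - P) * (C * P)) := by
        rw [hTmul, hTmul, ContinuousLinearMap.adjoint_comp, ContinuousLinearMap.adjoint_comp,
          hadj1P, hadjC, hadjP, hTmul, hTmul, ContinuousLinearMap.comp_assoc]
      have hnorm_eq : ‖T (P * (C * (1 - P)))‖ = ‖T ((1 - P) * (C * P))‖ := by
        rw [← hadjcomp]
        exact (ContinuousLinearMap.adjoint.norm_map _).symm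
      rw [hnorm_eq]
      have hre : T ((1 - P) * (C * P)) = (T ((1 - P) * C)).comp (T P) := by
        rw [hTmul, hTmul, hTmul, ContinuousLinearMap.comp_assoc]
      rw [hre]
      calc ‖(T ((1 - P) * C)).comp (T P)‖ ≤ ‖T ((1 - P) * C)‖ * ‖T P‖ :=
            ContinuousLinearMap.opNorm_comp_le _ _
        _ ≤ ε * 1 := mul_le_mul herr' hPnorm (norm_nonneg _) hε
        _ = ε := mul_one ε
    calc ‖T (C - P * C * P)‖ ≤ ‖T ((1 - P) * C)‖ + ‖T (P * (C * (1 - P)))‖ := by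
          rw [hTadd]; exact norm_add_le _ _
      _ ≤ ε + ε := add_le_add herr' hterm2
      _ = 2 * ε := by ring
  have goal1 : matMNorm B (C - P * C * P) ≤ 2 * ε := by rw [hmat]; exact key
  refine ⟨goal1, ?_⟩
  have hmats : B⁻¹ * (A - (B * Q) * (Qᵀ * A * Q) * (B * Q)ᵀ) = C - P * C * P := by
    rw [hC, hP]
    rw [Matrix.transpose_mul, hBsymm]
    rw [Matrix.mul_sub]
    congr 1
    calc B⁻¹ * (B * Q * (Qᵀ * A * Q) * (Qᵀ * B))
        = (B⁻¹ * B) * (Q * (Qᵀ * A * Q) * (Qᵀ * B)) := by simp only [Matrix.mul_assoc]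
      _ = Q * (Qᵀ * A * Q) * (Qᵀ * B) := by rw [hBiB, Matrix.one_mul]
      _ = Q * (Qᵀ * ((B * B⁻¹) * A) * Q) * (Qᵀ * B) := by rw [hBBi, Matrix.one_mul]
      _ = Q * Qᵀ * B * (B⁻¹ * A) * (Q * Qᵀ * B) := by simp only [Matrix.mul_assoc]
  rw [hmats]
  exact goal1
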